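/- arXiv:1601.02914 — 2 statements merged into one kernel-verified Lean document; each statement's English description precedes it below -/
import Mathlib

section
/- For every n ≥ 1, the star K_{1,n} satisfies τ(K_{1,n}) = (2n+1)/(n+1); consequently the infimum over all graphs G with at least one edge of τ(G) is strictly less than 2. -/
open SimpleGraph Function

/-- A Thue colouring of a simple graph `G`: a proper vertex colouring such that the
colour sequence along any path (here: the support of a path-walk) is non-repetitive,
i.e. it is never a square `l ++ l` with `l` nonempty. -/
def IsThueColoring {V α : Type*} (G : SimpleGraph V) (φ : V → α) : Prop :=
  (∀ ⦃a b : V⦄, G.Adj a b → φ a ≠ φ b) ∧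
  ∀ ⦃a b : V⦄ (p : G.Walk a b), p.IsPath →
    ∀ l : List α, l ≠ [] → p.support.map φ ≠ l ++ l

/-- The Thue chromatic number `π(G)`: the least number of colours admitting a Thue
colouring of `G`. -/
noncomputable def thueNumber {V : Type*} (G : SimpleGraph V) : ℕ :=
  sInf {k | ∃ φ : V → Fin k, IsThueColoring G φ}
/-- `l` is an ordering (a listing without repetition) of the edges of `G`. -/
def IsEdgeOrdering {V : Type*} (G : SimpleGraph V) (l : List (Sym2 V)) : Prop :=
  l.Nodup ∧ ∀ e, e ∈ l ↔ e ∈ G.edgeSet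

/-- The τ-value of an edge ordering: the average `(1/(ε+1)) Σ_{i=0}^{ε} π(G*ᵢ)` of the
Thue numbers of the graphs obtained by successively deleting the edges in order. -/
noncomputable def tauValue {V : Type*} (G : SimpleGraph V) (l : List (Sym2 V)) : ℝ :=
  (∑ i ∈ Finset.range (l.length + 1),
    (thueNumber (G.deleteEdges {e | e ∈ l.take i}) : ℝ)) / (l.length + 1)

/-- The τ-index of a graph: the minimum τ-value over all orderings of its edges. -/
noncomputable def tauIndex {V : Type*} (G : SimpleGraph V) : ℝ :=
  sInf {x | ∃ l : List (Sym2 V), IsEdgeOrdering G l ∧ tauValue G l = x}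
lemma thue_of_short {V α : Type*} (G : SimpleGraph V) (φ : V → α)
    (hp : ∀ ⦃a b⦄, G.Adj a b → φ a ≠ φ b)
    (hlen : ∀ ⦃a b⦄ (p : G.Walk a b), p.IsPath → p.support.length ≤ 3) :
    IsThueColoring G φ := by
  refine ⟨hp, ?_⟩
  intro a b p hpath l hl hEq
  have h1 : p.support.length ≤ 3 := hlen p hpath
  have h2 : (p.support.map φ).length = l.length + l.length := by
    rw [hEq, List.length_append]
  rw [List.length_map] at h2
  have hl0 : l.length ≠ 0 := by simpa using hl
  have hl1 : l.length = 1 := by omega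
  obtain ⟨x, rfl⟩ : ∃ x, l = [x] := by
    cases l with
    | nil => simp at hl1
    | cons y t => cases t with
      | nil => exact ⟨y, rfl⟩
      | cons z t' => simp at hl1
  cases p with
  | nil => simp at h2
  | cons h q =>
    cases q with
    | nil =>
      simp only [Walk.support_cons, Walk.support_nil, List.map_cons, List.map_nil] at hEq
      have : φ a = x ∧ φ b = x := by simpa using hEq
      exact hp h (this.1.trans this.2.symm)
    | cons h' q' => simp [Walk.support_cons] at h2

lemma thueNumber_eq_two {V : Type*} [Nonempty V] (G : SimpleGraph V)
    (φ : V → Fin 2) (hφ : IsThueColoring G φ) (he : G.edgeSet.Nonempty) :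
    thueNumber G = 2 := by
  refine le_antisymm (Nat.sInf_le ⟨φ, hφ⟩) ?_
  refine le_csInf ⟨2, φ, hφ⟩ ?_
  rintro k ⟨ψ, hψ, -⟩
  by_contra hk
  obtain ⟨e, he⟩ := he
  induction e with
  | h a b =>
    have hadj : G.Adj a b := (G.mem_edgeSet).mp he
    have := hψ hadj
    interval_cases k
    · exact (ψ a).elim0
    · exact this (Subsingleton.elim _ _)

lemma thueNumber_eq_one {V : Type*} [Nonempty V] (G : SimpleGraph V)
    (he : ∀ a b, ¬ G.Adj a b) : thueNumber G = 1 := by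
  have h1 : (1 : ℕ) ∈ {k | ∃ φ : V → Fin k, IsThueColoring G φ} := by
    refine ⟨fun _ => 0, fun a b hab => absurd hab (he a b), ?_⟩
    intro a b p hpath l hl hEq
    cases p with
    | nil =>
      have h2 : (1 : ℕ) = l.length + l.length := by
        simpa using congrArg List.length hEq
      have : l.length ≠ 0 := by simpa using hl
      omega
    | cons h q => exact he _ _ h
  refine le_antisymm (Nat.sInf_le h1) ?_
  refine le_csInf ⟨1, h1⟩ ?_
  rintro k ⟨ψ, -⟩
  by_contra hk
  have : k = 0 := by omega
  subst this
  exact (ψ (Classical.arbitrary V)).elim0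

lemma star_paths_short {n : ℕ} (s : Set (Sym2 (Fin 1 ⊕ Fin n)))
    {a b : Fin 1 ⊕ Fin n}
    (p : ((completeBipartiteGraph (Fin 1) (Fin n)).deleteEdges s).Walk a b)
    (hpath : p.IsPath) : p.support.length ≤ 3 := by
  by_contra hlong
  push_neg at hlong
  match p, hpath, hlong with
  | Walk.cons h1 (Walk.cons h2 (Walk.cons h3 q)), hpath, hlong =>
    rename_i c d e
    have g1 := (SimpleGraph.deleteEdges_adj.mp h1).1
    have g2 := (SimpleGraph.deleteEdges_adj.mp h2).1
    have g3 := (SimpleGraph.deleteEdges_adj.mp h3).1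
    have hnd := hpath.support_nodup
    simp only [Walk.support_cons, List.nodup_cons, List.mem_cons] at hnd
    rcases a with a | a <;> rcases c with c | c <;> rcases d with d | d <;>
      rcases e with e | e <;> simp_all [Fin.fin_one_eq_zero]
    exact hpath.1.2 (Fin.fin_one_eq_zero e ▸ q.start_mem_support)

lemma star_thueNumber_del {n : ℕ} (s : Set (Sym2 (Fin 1 ⊕ Fin n)))
    (he : ((completeBipartiteGraph (Fin 1) (Fin n)).deleteEdges s).edgeSet.Nonempty) :
    thueNumber ((completeBipartiteGraph (Fin 1) (Fin n)).deleteEdges s) = 2 := by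
  apply thueNumber_eq_two _ (Sum.elim (fun _ => (0 : Fin 2)) (fun _ => 1)) _ he
  apply thue_of_short
  · intro a b hab
    have g := (SimpleGraph.deleteEdges_adj.mp hab).1
    rcases a with a|a <;> rcases b with b|b <;> simp_all
  · exact fun a b p hp => star_paths_short s p hp

lemma ordering_del_nonempty {V : Type*} (G : SimpleGraph V) (l : List (Sym2 V))
    (hord : IsEdgeOrdering G l) {i : ℕ} (hi : i < l.length) :
    (G.deleteEdges {e | e ∈ l.take i}).edgeSet.Nonempty := by
  have hd : l.drop i ≠ [] := by
    simp [List.drop_eq_nil_iff]; omega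
  set e := (l.drop i).head hd with hedef
  have hel : e ∈ l := by
    have : e ∈ l.drop i := List.head_mem hd
    exact List.mem_of_mem_drop this
  have heE : e ∈ G.edgeSet := (hord.2 e).mp hel
  have hnotin : e ∉ l.take i := by
    have hnd : (l.take i ++ l.drop i).Nodup := by
      rw [List.take_append_drop]; exact hord.1
    have hdisj := List.disjoint_of_nodup_append hnd
    intro hmem
    exact hdisj hmem (List.head_mem hd)
  refine ⟨e, ?_⟩
  rw [SimpleGraph.edgeSet_deleteEdges]
  exact ⟨heE, hnotin⟩

lemma ordering_del_all {V : Type*} [Nonempty V] (G : SimpleGraph V) (l : List (Sym2 V))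
    (hord : IsEdgeOrdering G l) :
    thueNumber (G.deleteEdges {e | e ∈ l}) = 1 := by
  apply thueNumber_eq_one
  intro a b hab
  rw [SimpleGraph.deleteEdges_adj] at hab
  exact hab.2 ((hord.2 _).mpr ((G.mem_edgeSet).mpr hab.1))

lemma star_ordering (n : ℕ) :
    IsEdgeOrdering (completeBipartiteGraph (Fin 1) (Fin n))
      ((List.finRange n).map (fun j => s(Sum.inl 0, Sum.inr j))) := by
  constructor
  · refine List.Nodup.map ?_ (List.nodup_finRange n)
    intro j j' h
    rw [Sym2.eq_iff] at h
    rcases h with ⟨-, h⟩ | ⟨h, -⟩ <;> simp_all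
  · intro e
    induction e with
    | h a b =>
      simp only [List.mem_map, List.mem_finRange, true_and, SimpleGraph.mem_edgeSet]
      rcases a with a|a <;> rcases b with b|b <;>
        simp [Sym2.eq_iff, Fin.fin_one_eq_zero]

lemma star_ordering_length {n : ℕ} (l : List (Sym2 (Fin 1 ⊕ Fin n)))
    (hord : IsEdgeOrdering (completeBipartiteGraph (Fin 1) (Fin n)) l) :
    l.length = n := by
  have hperm : l.Perm ((List.finRange n).map (fun j => s(Sum.inl 0, Sum.inr j))) :=
    (List.perm_ext_iff_of_nodup hord.1 (star_ordering n).1).mpr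
      (fun e => by rw [hord.2, (star_ordering n).2])
  simpa using hperm.length_eq

lemma star_tauValue {n : ℕ} (l : List (Sym2 (Fin 1 ⊕ Fin n)))
    (hord : IsEdgeOrdering (completeBipartiteGraph (Fin 1) (Fin n)) l) :
    tauValue (completeBipartiteGraph (Fin 1) (Fin n)) l = (2 * n + 1) / (n + 1) := by
  have hlen := star_ordering_length l hord
  unfold tauValue
  rw [hlen, Finset.sum_range_succ]
  have h1 : ∀ i ∈ Finset.range n,
      (thueNumber ((completeBipartiteGraph (Fin 1) (Fin n)).deleteEdges
        {e | e ∈ l.take i}) : ℝ) = 2 := by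
    intro i hi
    rw [star_thueNumber_del _ (ordering_del_nonempty _ l hord
      (by rw [hlen]; exact Finset.mem_range.mp hi))]
    norm_num
  rw [Finset.sum_congr rfl h1]
  have ht : l.take n = l := List.take_of_length_le (le_of_eq hlen)
  rw [ht, ordering_del_all _ l hord]
  simp [mul_comm]

lemma K2_ordering : IsEdgeOrdering (⊤ : SimpleGraph (Fin 2)) [s((0 : Fin 2), (1 : Fin 2))] := by
  refine ⟨List.nodup_singleton _, ?_⟩
  intro e
  induction e with
  | h a b =>
    simp only [List.mem_singleton, SimpleGraph.mem_edgeSet, SimpleGraph.top_adj]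
    fin_cases a <;> fin_cases b <;> simp [Sym2.eq_iff] <;> decide

lemma K2_thueNumber_del (s : Set (Sym2 (Fin 2)))
    (he : ((⊤ : SimpleGraph (Fin 2)).deleteEdges s).edgeSet.Nonempty) :
    thueNumber ((⊤ : SimpleGraph (Fin 2)).deleteEdges s) = 2 := by
  apply thueNumber_eq_two _ (fun v => v) _ he
  apply thue_of_short
  · intro a b hab
    exact (SimpleGraph.deleteEdges_adj.mp hab).1.ne
  · intro a b p hp
    calc p.support.length ≤ Fintype.card (Fin 2) := hp.support_nodup.length_le_card
    _ ≤ 3 := by simp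

lemma K2_tauValue {l : List (Sym2 (Fin 2))}
    (hord : IsEdgeOrdering (⊤ : SimpleGraph (Fin 2)) l) :
    tauValue (⊤ : SimpleGraph (Fin 2)) l = 3 / 2 := by
  have hperm : l.Perm [s((0 : Fin 2), (1 : Fin 2))] :=
    (List.perm_ext_iff_of_nodup hord.1 K2_ordering.1).mpr
      (fun e => by rw [hord.2, K2_ordering.2])
  have hlen : l.length = 1 := by simpa using hperm.length_eq
  unfold tauValue
  rw [hlen]
  rw [show Finset.range (1 + 1) = {0, 1} by decide, Finset.sum_insert (by decide),
    Finset.sum_singleton]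
  have h0 : thueNumber ((⊤ : SimpleGraph (Fin 2)).deleteEdges {e | e ∈ l.take 0}) = 2 :=
    K2_thueNumber_del _ (ordering_del_nonempty _ l hord (by omega))
  have ht : l.take 1 = l := List.take_of_length_le (le_of_eq hlen)
  rw [h0, ht, ordering_del_all _ l hord]
  norm_num

/-- the star `K_{1,n}` satisfies `τ(K_{1,n}) = (2n+1)/(n+1)` for all
`n ≥ 1`; consequently the infimum of `τ` over all graphs with at least one edge is
strictly less than `2` (i.e. some graph with an edge has `τ(G) < 2`). -/
theorem tauIndex_star_and_lt_two :
    (∀ n : ℕ, 1 ≤ n →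
      tauIndex (completeBipartiteGraph (Fin 1) (Fin n)) = (2 * n + 1) / (n + 1)) ∧
    ∃ (m : ℕ) (G : SimpleGraph (Fin m)), G.edgeSet.Nonempty ∧ tauIndex G < 2 := by
  constructor
  · intro n hn
    have hset : {x | ∃ l : List (Sym2 (Fin 1 ⊕ Fin n)),
        IsEdgeOrdering (completeBipartiteGraph (Fin 1) (Fin n)) l ∧
        tauValue (completeBipartiteGraph (Fin 1) (Fin n)) l = x}
        = {((2 * n + 1) / (n + 1) : ℝ)} := by
      ext x
      simp only [Set.mem_setOf_eq, Set.mem_singleton_iff]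
      constructor
      · rintro ⟨l, hord, rfl⟩
        exact star_tauValue l hord
      · rintro rfl
        exact ⟨_, star_ordering n, star_tauValue _ (star_ordering n)⟩
    rw [tauIndex, hset, csInf_singleton]
  · refine ⟨2, ⊤, ⟨s((0 : Fin 2), (1 : Fin 2)), by simp⟩, ?_⟩
    have hset : {x | ∃ l : List (Sym2 (Fin 2)),
        IsEdgeOrdering (⊤ : SimpleGraph (Fin 2)) l ∧
        tauValue (⊤ : SimpleGraph (Fin 2)) l = x} = {(3 / 2 : ℝ)} := by
      ext x
      simp only [Set.mem_setOf_eq, Set.mem_singleton_iff]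
      constructor
      · rintro ⟨l, hord, rfl⟩
        exact K2_tauValue hord
      · rintro rfl
        exact ⟨_, K2_ordering, K2_tauValue K2_ordering⟩
    rw [tauIndex, hset, csInf_singleton]
    norm_num
end

section
/- For the path P_n on n ≥ 4 vertices, the τ-index is τ(P_n) = (7n−6)/(3n) if n ≡ 0 (mod 3), τ(P_n) = (7n−5)/(3n) if n ≡ 2 (mod 3) (i.e. n = 3t−1), and τ(P_n) = (7n−4)/(3n) if n ≡ 1 (mod 3) (i.e. n = 3t−2). -/
open SimpleGraph Function

/-- The Thue–Morse sequence. -/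
def tm : ℕ → Bool := fun n =>
  if h : n = 0 then false else xor (decide (n % 2 = 1)) (tm (n / 2))
decreasing_by exact Nat.div_lt_self (Nat.pos_of_ne_zero h) one_lt_two

lemma tm_two_mul (n : ℕ) : tm (2 * n) = tm n := by
  rcases Nat.eq_zero_or_pos n with h | h
  · subst h; rfl
  · rw [tm]
    have h0 : ¬ (2 * n = 0) := by omega
    have h1 : ¬ (2 * n % 2 = 1) := by omega
    have h2 : 2 * n / 2 = n := by omega
    simp [h0, h1, h2]

lemma tm_two_mul_add_one (n : ℕ) : tm (2 * n + 1) = !tm n := by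
  rw [tm]
  have h0 : ¬ (2 * n + 1 = 0) := by omega
  have h1 : (2 * n + 1) % 2 = 1 := by omega
  have h2 : (2 * n + 1) / 2 = n := by omega
  simp [h0, h1, h2, Bool.xor_comm]

lemma tm_no3 (k : ℕ) : ¬ (tm k = tm (k + 1) ∧ tm (k + 1) = tm (k + 2)) := by
  rintro ⟨ha, hb⟩
  rcases Nat.even_or_odd k with ⟨m, hm⟩ | ⟨m, hm⟩
  · rw [show k = 2 * m from by omega, show 2 * m + 1 = 2 * m + 1 from rfl,
      tm_two_mul, tm_two_mul_add_one] at ha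
    cases tm m <;> simp_all
  · rw [show k + 1 = 2 * (m + 1) from by omega, show k + 2 = 2 * (m + 1) + 1 from by omega,
      tm_two_mul, tm_two_mul_add_one] at hb
    cases tm (m + 1) <;> simp_all

/-- Thue–Morse has no "overlap": no block of length `p+1` equal to its translate by `p`. -/
theorem tm_no_overlap : ∀ p, 1 ≤ p → ∀ j, ¬ (∀ m, j ≤ m → m ≤ j + p → tm m = tm (m + p)) := by
  intro p
  induction p using Nat.strong_induction_on with
  | _ p IH =>
  intro hp j H
  by_cases hp1 : p = 1
  · subst hp1
    exact tm_no3 j ⟨by simpa using H j le_rfl (by omega),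
      by simpa using H (j + 1) (by omega) (by omega)⟩
  rcases Nat.even_or_odd p with ⟨q, hq⟩ | ⟨r, hr⟩
  · -- p = 2q
    have hq' : p = 2 * q := by omega
    have hq1 : 1 ≤ q := by omega
    rcases Nat.even_or_odd j with ⟨b, hb⟩ | ⟨b, hb⟩
    · have hb' : j = 2 * b := by omega
      refine IH q (by omega) hq1 b (fun m h1 h2 => ?_)
      have := H (2 * m) (by omega) (by omega)
      rw [hq', hb'] at *
      rw [show 2 * m + 2 * q = 2 * (m + q) by ring, tm_two_mul, tm_two_mul] at this
      exact this
    · have hb' : j = 2 * b + 1 := by omega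
      refine IH q (by omega) hq1 b (fun m h1 h2 => ?_)
      have hh := H (2 * m + 1) (by omega) (by omega)
      rw [show 2 * m + 1 + p = 2 * (m + q) + 1 from by omega,
        tm_two_mul_add_one, tm_two_mul_add_one] at hh
      cases h : tm m <;> simp_all
  · -- p = 2r + 1, r ≥ 1
    have hr1 : 1 ≤ r := by omega
    have claim : ∀ a, j ≤ 2 * a → 2 * a + 2 ≤ j + p → tm (a + 1) = tm a := by
      intro a h1 h2
      have rel2 := H (2 * a + 1) (by omega) (by omega)
      have rel3 := H (2 * a + 2) (by omega) (by omega)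
      rw [show 2 * a + 1 = 2 * a + 1 from rfl, tm_two_mul_add_one,
        show 2 * a + 1 + p = 2 * (a + r + 1) from by omega, tm_two_mul] at rel2
      rw [show 2 * a + 2 = 2 * (a + 1) from by omega, tm_two_mul,
        show 2 * (a + 1) + p = 2 * (a + r + 1) + 1 from by omega, tm_two_mul_add_one] at rel3
      rw [rel3, ← rel2]
      cases tm a <;> rfl
    set a := (j + 1) / 2 with ha
    have h2a : j ≤ 2 * a ∧ 2 * a ≤ j + 1 := by omega
    by_cases hr2 : r = 1
    · -- p = 3
      have rel1 := H (2 * a) (by omega) (by omega)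
      rw [tm_two_mul, show 2 * a + p = 2 * (a + r) + 1 from by omega,
        tm_two_mul_add_one] at rel1
      have hc := claim a (by omega) (by omega)
      rw [hr2] at rel1
      rw [hc] at rel1
      cases tm a <;> simp_all
    · -- r ≥ 2, p ≥ 5
      have hc1 := claim a (by omega) (by omega)
      have hc2 := claim (a + 1) (by omega) (by omega)
      exact tm_no3 a ⟨hc1.symm, by rw [show a + 2 = a + 1 + 1 from rfl, hc2]⟩

/-- `tm` as an integer. -/
def tmz (n : ℕ) : ℤ := if tm n then 1 else 0

lemma tmz_cases (n : ℕ) : tmz n = 0 ∨ tmz n = 1 := by unfold tmz; cases tm n <;> simp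

lemma tmz_inj {m m' : ℕ} (h : tmz m = tmz m') : tm m = tm m' := by
  unfold tmz at h; cases hm : tm m <;> cases hm' : tm m' <;> simp_all

/-- The increment word of Thue–Morse is square-free. -/
theorem tmz_squarefree : ∀ p, 1 ≤ p → ∀ i,
    ¬ (∀ k, k < p → tmz (i + k + 1) - tmz (i + k) = tmz (i + p + k + 1) - tmz (i + p + k)) := by
  intro p hp i hw
  have const : ∀ k, k ≤ p → tmz (i + k + p) - tmz (i + k) = tmz (i + p) - tmz i := by
    intro k hk
    induction k with
    | zero => simp
    | succ k ih =>
      have h1 := hw k (by omega)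
      have h2 := ih (by omega)
      rw [show i + k + p = i + p + k from by omega] at h2
      rw [show i + (k + 1) + p = i + p + k + 1 from by omega,
        show i + (k + 1) = i + k + 1 from by omega]
      omega
  by_cases he : tmz (i + p) - tmz i = 0
  · refine tm_no_overlap p hp i (fun m h1 h2 => ?_)
    have := const (m - i) (by omega)
    rw [show i + (m - i) + p = m + p from by omega, show i + (m - i) = m from by omega] at this
    exact tmz_inj (by omega)
  · have hconst : ∀ k, k ≤ p → tm (i + k) = tm i := by
      intro k hk
      have h1 := const k hk
      have := tmz_cases (i + k)
      have := tmz_cases (i + k + p)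
      have := tmz_cases i
      have := tmz_cases (i + p)
      refine tmz_inj ?_
      omega
    by_cases hp1 : p = 1
    · subst hp1
      have h1 := hconst 1 (by omega)
      have : tmz (i + 1) = tmz i := by unfold tmz; rw [h1]
      omega
    · refine tm_no3 i ⟨?_, ?_⟩
      · rw [show i + 1 = i + 1 from rfl, ← hconst 1 (by omega)]
      · rw [show i + 1 = i + 1 from rfl, hconst 1 (by omega), ← hconst 2 (by omega)]

/-- The square-free ternary word used to colour paths. -/
def wc (j : ℕ) : Fin 3 := if tm j = tm (j + 1) then 0 else if tm j then 1 else 2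

lemma wc_eq_iff {j j' : ℕ} (h : wc j = wc j') :
    tmz (j + 1) - tmz j = tmz (j' + 1) - tmz j' := by
  unfold wc at h
  unfold tmz
  cases h1 : tm j <;> cases h2 : tm (j + 1) <;> cases h3 : tm j' <;> cases h4 : tm (j' + 1) <;>
    simp_all

theorem wc_squarefree : ∀ p, 1 ≤ p → ∀ i, ¬ (∀ k, k < p → wc (i + k) = wc (i + p + k)) := by
  intro p hp i hw
  exact tmz_squarefree p hp i (fun k hk => wc_eq_iff (hw k hk))

lemma wc_ne_succ (j : ℕ) : wc j ≠ wc (j + 1) := by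
  intro h
  refine wc_squarefree 1 le_rfl j (fun k hk => ?_)
  interval_cases k
  simpa using h

section PathStructure

open List

lemma chain_mono (L : List ℕ) (hc : L.Chain' (fun a b => a + 1 = b ∨ b + 1 = a))
    (hn : L.Nodup) :
    L.Chain' (fun a b => a + 1 = b) ∨ L.Chain' (fun a b => b + 1 = a) := by
  induction L with
  | nil => left; exact List.isChain_nil
  | cons x L ih =>
    cases L with
    | nil => left; exact List.isChain_singleton _
    | cons y M =>
      obtain ⟨hxy, hc'⟩ := List.isChain_cons_cons.mp hc
      have hn' : (y :: M).Nodup := hn.of_cons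
      rcases ih hc' hn' with hasc | hdesc
      · rcases hxy with h | h
        · left; exact List.isChain_cons_cons.mpr ⟨h, hasc⟩
        · cases M with
          | nil => right; exact List.isChain_cons_cons.mpr ⟨h, List.isChain_singleton _⟩
          | cons z N =>
            exfalso
            have hyz : y + 1 = z := (List.isChain_cons_cons.mp hasc).1
            have hxz : x = z := by omega
            simp only [List.nodup_cons, List.mem_cons] at hn
            exact hn.1 (Or.inr (Or.inl hxz))
      · rcases hxy with h | h
        · cases M with
          | nil => left; exact List.isChain_cons_cons.mpr ⟨h, List.isChain_singleton _⟩
          | cons z N =>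
            exfalso
            have hyz : z + 1 = y := (List.isChain_cons_cons.mp hdesc).1
            have hxz : x = z := by omega
            simp only [List.nodup_cons, List.mem_cons] at hn
            exact hn.1 (Or.inr (Or.inl hxz))
        · right; exact List.isChain_cons_cons.mpr ⟨h, hdesc⟩

lemma chain_asc_range (L : List ℕ) (hc : L.Chain' (fun a b => a + 1 = b)) :
    ∃ a, L = List.range' a L.length := by
  induction L with
  | nil => exact ⟨0, rfl⟩
  | cons x L ih =>
    cases L with
    | nil => exact ⟨x, rfl⟩
    | cons y M =>
      obtain ⟨hxy, hc'⟩ := List.isChain_cons_cons.mp hc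
      obtain ⟨a, ha⟩ := ih hc'
      have hya : y = a := by
        rw [List.length_cons, List.range'_succ] at ha
        exact (List.cons_eq_cons.mp ha).1
      subst hya
      refine ⟨x, ?_⟩
      have hlen : (x :: y :: M).length = (y :: M).length + 1 := rfl
      rw [hlen, List.range'_succ, hxy]
      exact congrArg _ ha

lemma map_range'_eq {α : Type*} (f : ℕ → α) :
    ∀ (q a b : ℕ), (List.range' a q).map f = (List.range' b q).map f →
      ∀ k < q, f (a + k) = f (b + k) := by
  intro q
  induction q with
  | zero => intro a b _ k hk; omega
  | succ q ih =>
    intro a b h k hk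
    rw [List.range'_succ, List.range'_succ, List.map_cons, List.map_cons,
      List.cons_eq_cons] at h
    rcases Nat.eq_zero_or_pos k with rfl | hk0
    · simpa using h.1
    · have := ih (a + 1) (b + 1) h.2 (k - 1) (by omega)
      rw [show a + 1 + (k - 1) = a + k from by omega,
        show b + 1 + (k - 1) = b + k from by omega] at this
      exact this

lemma wc_range'_no_square (a m : ℕ) (l : List (Fin 3)) (hl : l ≠ []) :
    (List.range' a m).map wc ≠ l ++ l := by
  intro h
  have hm : m = l.length + l.length := by
    have := congrArg List.length h
    simpa using this
  set q := l.length with hq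
  have hq1 : 1 ≤ q := by
    cases l with
    | nil => exact absurd rfl hl
    | cons c L => simp [hq]
  have hsplit : List.range' a m = List.range' a q ++ List.range' (a + q) q := by
    rw [hm]
    have := List.range'_append (s := a) (m := q) (n := q) (step := 1)
    simp only [one_mul, Nat.add_comm q q] at this ⊢
    rw [← this]
  rw [hsplit, List.map_append] at h
  have hlen : ((List.range' a q).map wc).length = l.length := by simp [hq]
  obtain ⟨h1, h2⟩ := List.append_inj h hlen
  refine wc_squarefree q hq1 a (fun k hk => ?_)
  have := map_range'_eq wc q a (a + q) (by rw [h1, h2]) k hk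
  rwa [show a + q + k = a + (q + k) from by omega, ← Nat.add_assoc] at this

end PathStructure

open SimpleGraph in
theorem isThueColoring_pathGraph (n : ℕ) :
    IsThueColoring (pathGraph n) (fun v => wc v.val) := by
  constructor
  · intro a b hab
    show wc a.val ≠ wc b.val
    rcases pathGraph_adj.mp hab with h | h
    · rw [← h]; exact wc_ne_succ a.val
    · rw [← h]; exact (wc_ne_succ b.val).symm
  · intro a b p hp l hl hsq
    have hLc : (p.support.map Fin.val).Chain' (fun a b => a + 1 = b ∨ b + 1 = a) :=
      List.isChain_map_of_isChain Fin.val (fun a b hab => pathGraph_adj.mp hab)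
        p.isChain_adj_support
    have hLn : (p.support.map Fin.val).Nodup := hp.support_nodup.map Fin.val_injective
    have hmm : (p.support.map Fin.val).map wc = l ++ l := by
      rw [List.map_map]; exact hsq
    rcases chain_mono _ hLc hLn with hasc | hdesc
    · obtain ⟨c, hc⟩ := chain_asc_range _ hasc
      rw [hc] at hmm
      exact wc_range'_no_square _ _ l hl hmm
    · have hrev : (p.support.map Fin.val).reverse.Chain' (fun a b => a + 1 = b) := by
        show List.IsChain (fun a b => a + 1 = b) (p.support.map Fin.val).reverse
        rw [List.isChain_reverse]
        exact List.IsChain.imp (fun a b h => h) hdesc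
      obtain ⟨c, hc⟩ := chain_asc_range _ hrev
      have hmm' : (p.support.map Fin.val).reverse.map wc = l.reverse ++ l.reverse := by
        rw [List.map_reverse, hmm, List.reverse_append]
      rw [hc] at hmm'
      exact wc_range'_no_square _ _ l.reverse (by simpa using hl) hmm'

lemma IsThueColoring.mono {V α : Type*} {G H : SimpleGraph V} (hle : H ≤ G) {φ : V → α}
    (hG : IsThueColoring G φ) : IsThueColoring H φ := by
  refine ⟨fun a b hab => hG.1 (hle hab), fun a b p hp l hl => ?_⟩
  have hsub : ∀ e ∈ p.edges, e ∈ G.edgeSet :=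
    fun e he => SimpleGraph.edgeSet_mono hle (p.edges_subset_edgeSet he)
  have := hG.2 (p.transfer G hsub) (hp.transfer hsub) l hl
  rwa [SimpleGraph.Walk.support_transfer] at this


section ThueNumber

open SimpleGraph

variable {n : ℕ}

lemma thueNumber_le {G : SimpleGraph (Fin n)} {k : ℕ}
    (h : ∃ φ : Fin n → Fin k, IsThueColoring G φ) : thueNumber G ≤ k :=
  Nat.sInf_le h

lemma le_thueNumber {G : SimpleGraph (Fin n)} {m : ℕ}
    (hne : ∃ k, ∃ φ : Fin n → Fin k, IsThueColoring G φ)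
    (h : ∀ k (φ : Fin n → Fin k), IsThueColoring G φ → m ≤ k) : m ≤ thueNumber G := by
  obtain ⟨k0, hk0⟩ := hne
  exact le_csInf ⟨k0, hk0⟩ (fun k ⟨φ, hφ⟩ => h k φ hφ)

lemma exists_thue_three {G : SimpleGraph (Fin n)} (hle : G ≤ pathGraph n) :
    ∃ φ : Fin n → Fin 3, IsThueColoring G φ :=
  ⟨_, (isThueColoring_pathGraph n).mono hle⟩

lemma one_le_thueNumber_aux (hn : 1 ≤ n) (k : ℕ) (φ : Fin n → Fin k) : 1 ≤ k := by
  rcases Nat.eq_zero_or_pos k with rfl | h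
  · exact absurd (φ ⟨0, by omega⟩).isLt (by omega)
  · omega

lemma two_le_thueNumber_aux {G : SimpleGraph (Fin n)} {a b : Fin n} (hab : G.Adj a b)
    (k : ℕ) (φ : Fin n → Fin k) (hφ : IsThueColoring G φ) : 2 ≤ k := by
  have h1 := (φ a).isLt
  have h2 := (φ b).isLt
  have h3 : φ a ≠ φ b := hφ.1 hab
  have h4 : (φ a).val ≠ (φ b).val := fun h => h3 (Fin.val_injective h)
  omega

lemma three_le_thueNumber_aux {G : SimpleGraph (Fin n)} {a b c d : Fin n}
    (hab : G.Adj a b) (hbc : G.Adj b c) (hcd : G.Adj c d)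
    (hac : a ≠ c) (had : a ≠ d) (hbd : b ≠ d)
    (k : ℕ) (φ : Fin n → Fin k) (hφ : IsThueColoring G φ) : 3 ≤ k := by
  by_contra hk
  push_neg at hk
  have h1 := (φ a).isLt
  have h2 := (φ b).isLt
  have h3 := (φ c).isLt
  have h4 := (φ d).isLt
  have hvab : (φ a).val ≠ (φ b).val := fun h => hφ.1 hab (Fin.val_injective h)
  have hvbc : (φ b).val ≠ (φ c).val := fun h => hφ.1 hbc (Fin.val_injective h)
  have hvcd : (φ c).val ≠ (φ d).val := fun h => hφ.1 hcd (Fin.val_injective h)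
  have hφac : φ a = φ c := Fin.val_injective (by omega)
  have hφbd : φ b = φ d := Fin.val_injective (by omega)
  set p : G.Walk a d := Walk.cons hab (Walk.cons hbc (Walk.cons hcd Walk.nil)) with hp
  have hpath : p.IsPath := by
    rw [hp, SimpleGraph.Walk.isPath_def]
    simp only [SimpleGraph.Walk.support_cons, SimpleGraph.Walk.support_nil]
    simp [hab.ne, hbc.ne, hcd.ne, hac, had, hbd]
  have := hφ.2 p hpath [φ a, φ b] (by simp)
  apply this
  rw [hp]
  simp only [SimpleGraph.Walk.support_cons, SimpleGraph.Walk.support_nil, List.map_cons,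
    List.map_nil]
  rw [hφac, hφbd]
  rfl

lemma thueNumber_edgeless {G : SimpleGraph (Fin n)} (hn : 1 ≤ n)
    (h : ∀ a b : Fin n, ¬ G.Adj a b) : thueNumber G = 1 := by
  have hmem : ∃ φ : Fin n → Fin 1, IsThueColoring G φ := by
    refine ⟨fun _ => 0, fun a b hab => absurd hab (h a b), ?_⟩
    intro a b p hp l hl hsq
    cases p with
    | nil =>
      have := congrArg List.length hsq
      simp only [SimpleGraph.Walk.support_nil, List.length_map, List.length_cons,
        List.length_nil, List.length_append] at this
      have : 1 ≤ l.length := List.length_pos_iff.mpr hl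
      omega
    | cons hadj q => exact h _ _ hadj
  refine le_antisymm (thueNumber_le hmem) (le_thueNumber ⟨1, hmem⟩ ?_)
  exact fun k φ _ => one_le_thueNumber_aux hn k φ

end ThueNumber

section TwoColor

open SimpleGraph

lemma blockgraph_thue2 {n : ℕ} {G : SimpleGraph (Fin n)}
    (hG : ∀ a b : Fin n, G.Adj a b →
      (a.val + 1 = b.val ∨ b.val + 1 = a.val) ∧ a.val / 3 = b.val / 3) :
    ∃ φ : Fin n → Fin 2, IsThueColoring G φ := by
  refine ⟨fun v => ⟨if v.val % 3 = 1 then 1 else 0, by split <;> omega⟩, ?_, ?_⟩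
  · intro a b hab h
    obtain ⟨hstep, hdiv⟩ := hG a b hab
    have := congrArg Fin.val h
    simp only at this
    split_ifs at this <;> omega
  · intro a b p hp l hl hsq
    -- the support is confined to one block of three vertices
    have hLc : (p.support.map Fin.val).Chain' (fun x y => x / 3 = y / 3) :=
      List.isChain_map_of_isChain Fin.val (fun a b hab => (hG a b hab).2)
        p.isChain_adj_support
    have hLn : (p.support.map Fin.val).Nodup := hp.support_nodup.map Fin.val_injective
    have hLp : (p.support.map Fin.val).Pairwise (fun x y => x / 3 = y / 3) := by
      haveI : IsTrans ℕ (fun x y => x / 3 = y / 3) := ⟨fun x y z h1 h2 => h1.trans h2⟩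
      exact List.isChain_iff_pairwise.mp hLc
    have hlen3 : p.support.length ≤ 3 := by
      by_contra hlen
      push_neg at hlen
      have hlen' : 4 ≤ (p.support.map Fin.val).length := by
        simp only [List.length_map]; omega
      obtain ⟨w, x, y, z, rest, hL⟩ :
          ∃ w x y z rest, p.support.map Fin.val = w :: x :: y :: z :: rest := by
        rcases hLL : p.support.map Fin.val with _ | ⟨w, _ | ⟨x, _ | ⟨y, _ | ⟨z, r⟩⟩⟩⟩ <;>
          simp [hLL] at hlen' ⊢
      rw [hL] at hLp hLn
      simp only [List.pairwise_cons, List.mem_cons, List.nodup_cons] at hLp hLn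
      obtain ⟨hw, hx, hy, -⟩ := hLp
      have h1 := hw x (by simp)
      have h2 := hw y (by simp)
      have h3 := hw z (by simp)
      have h4 := hx y (by simp)
      have n1 : w ≠ x := fun h => hLn.1 (by simp [h])
      have n2 : w ≠ y := fun h => hLn.1 (by simp [h])
      have n3 : w ≠ z := fun h => hLn.1 (by simp [h])
      have n4 : x ≠ y := fun h => hLn.2.1 (by simp [h])
      have n5 : x ≠ z := fun h => hLn.2.1 (by simp [h])
      have n6 : y ≠ z := fun h => hLn.2.2.1 (by simp [h])
      omega
    -- hence any square must have length 2
    have hlensq := congrArg List.length hsq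
    simp only [List.length_map, List.length_append] at hlensq
    have hl1 : 1 ≤ l.length := List.length_pos_iff.mpr hl
    have hll : l.length = 1 := by omega
    obtain ⟨c, rfl⟩ : ∃ c, l = [c] := by
      rcases l with _ | ⟨c, _ | _⟩ <;> simp_all
    obtain ⟨u, v, hsup⟩ : ∃ u v, p.support = [u, v] := by
      rcases hs : p.support with _ | ⟨u, _ | ⟨v, _ | _⟩⟩ <;> simp_all
    have hadj : G.Adj u v := by
      have := p.isChain_adj_support
      rw [hsup] at this
      exact (List.isChain_cons_cons.mp this).1
    rw [hsup, List.singleton_append] at hsq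
    simp only [List.map_cons, List.map_nil] at hsq
    injection hsq with i1 i2
    injection i2 with i3 _
    have key := i1.trans i3.symm
    have keyv : (if u.val % 3 = 1 then 1 else 0 : ℕ) = (if v.val % 3 = 1 then 1 else 0) :=
      congrArg Fin.val key
    obtain ⟨hstep, hdiv⟩ := hG u v hadj
    split_ifs at keyv <;> omega

end TwoColor

section Edges

open SimpleGraph
open Fin.NatCast

/-- The edge `{v, v+1}` of the path graph. -/
def pe (n : ℕ) [NeZero n] (v : ℕ) : Sym2 (Fin n) := s((v : Fin n), ((v + 1 : ℕ) : Fin n))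

variable {n : ℕ} [NeZero n]

lemma pe_adj {v : ℕ} (hv : v + 1 < n) :
    (pathGraph n).Adj (v : Fin n) ((v + 1 : ℕ) : Fin n) := by
  rw [pathGraph_adj]
  left
  rw [Fin.val_cast_of_lt (by omega), Fin.val_cast_of_lt hv]

lemma pe_mem {v : ℕ} (hv : v + 1 < n) : pe n v ∈ (pathGraph n).edgeSet :=
  (SimpleGraph.mem_edgeSet _).mpr (pe_adj hv)

lemma pe_inj {v w : ℕ} (hv : v + 1 < n) (hw : w + 1 < n) (h : pe n v = pe n w) : v = w := by
  rw [pe, pe, Sym2.eq_iff] at h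
  rcases h with ⟨h1, -⟩ | ⟨h1, h2⟩
  · have := congrArg Fin.val h1
    rwa [Fin.val_cast_of_lt (by omega), Fin.val_cast_of_lt (by omega)] at this
  · have e1 := congrArg Fin.val h1
    have e2 := congrArg Fin.val h2
    rw [Fin.val_cast_of_lt (by omega), Fin.val_cast_of_lt (by omega)] at e1
    rw [Fin.val_cast_of_lt (by omega), Fin.val_cast_of_lt (by omega)] at e2
    omega

lemma edge_form {e : Sym2 (Fin n)} (he : e ∈ (pathGraph n).edgeSet) :
    ∃ v, v + 1 < n ∧ e = pe n v := by
  induction e using Sym2.ind with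
  | _ a b =>
    rw [SimpleGraph.mem_edgeSet, pathGraph_adj] at he
    rcases he with h | h
    · refine ⟨a.val, by omega, ?_⟩
      have ha : ((a.val : ℕ) : Fin n) = a := Fin.cast_val_eq_self a
      have hb : ((a.val + 1 : ℕ) : Fin n) = b := by
        refine Fin.ext ?_
        rw [Fin.val_cast_of_lt (by omega)]
        omega
      rw [pe, ha, hb]
    · refine ⟨b.val, by omega, ?_⟩
      have hb : ((b.val : ℕ) : Fin n) = b := Fin.cast_val_eq_self b
      have ha : ((b.val + 1 : ℕ) : Fin n) = a := by
        refine Fin.ext ?_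
        rw [Fin.val_cast_of_lt (by omega)]
        omega
      rw [pe, hb, ha, Sym2.eq_swap]

/-- The edge finset of the path graph. -/
def EF (n : ℕ) [NeZero n] : Finset (Sym2 (Fin n)) := (Finset.range (n - 1)).image (pe n)

lemma mem_EF {e : Sym2 (Fin n)} : e ∈ EF n ↔ e ∈ (pathGraph n).edgeSet := by
  constructor
  · intro he
    obtain ⟨v, hv, rfl⟩ := Finset.mem_image.mp he
    exact pe_mem (by have := Finset.mem_range.mp hv; omega)
  · intro he
    obtain ⟨v, hv, rfl⟩ := edge_form he
    exact Finset.mem_image.mpr ⟨v, Finset.mem_range.mpr (by omega), rfl⟩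

lemma card_EF : (EF n).card = n - 1 := by
  rw [EF, Finset.card_image_of_injOn, Finset.card_range]
  intro v hv w hw h
  exact pe_inj (by have := Finset.mem_range.mp hv; omega)
    (by have := Finset.mem_range.mp hw; omega) h

lemma ordering_toFinset {l : List (Sym2 (Fin n))} (hl : IsEdgeOrdering (pathGraph n) l) :
    l.toFinset = EF n := by
  ext e
  rw [List.mem_toFinset, hl.2 e, mem_EF]

lemma ordering_length {l : List (Sym2 (Fin n))} (hl : IsEdgeOrdering (pathGraph n) l) :
    l.length = n - 1 := by
  rw [← List.toFinset_card_of_nodup hl.1, ordering_toFinset hl, card_EF]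

lemma exists_surviving {l : List (Sym2 (Fin n))} (hl : IsEdgeOrdering (pathGraph n) l)
    {i : ℕ} (hi : i ≤ n - 2) (hn : 2 ≤ n) :
    ∃ v, v + 1 < n ∧ pe n v ∉ l.take i := by
  by_contra h
  push_neg at h
  have hsub : EF n ⊆ (l.take i).toFinset := by
    intro e he
    obtain ⟨v, hv, rfl⟩ := Finset.mem_image.mp he
    exact List.mem_toFinset.mpr (h v (by have := Finset.mem_range.mp hv; omega))
  have h1 := Finset.card_le_card hsub
  have h2 : (l.take i).toFinset.card ≤ (l.take i).length := List.toFinset_card_le _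
  have h3 : (l.take i).length ≤ i := by simp [List.length_take]
  rw [card_EF] at h1
  omega

lemma exists_group {l : List (Sym2 (Fin n))} (hl : IsEdgeOrdering (pathGraph n) l)
    {i : ℕ} (hn : 4 ≤ n) (hi : i < (n + 2) / 3 - 1) :
    ∃ g, 3 * g + 3 ≤ n - 1 ∧ ∀ v, 3 * g ≤ v → v ≤ 3 * g + 2 → pe n v ∉ l.take i := by
  by_contra hcon
  push_neg at hcon
  set d := (n + 2) / 3 - 1 with hd
  have hch : ∀ g, g < d → ∃ v, (3 * g ≤ v ∧ v ≤ 3 * g + 2) ∧ pe n v ∈ l.take i := by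
    intro g hg
    obtain ⟨v, h1, h2, h3⟩ := hcon g (by omega)
    exact ⟨v, ⟨h1, h2⟩, h3⟩
  choose! v hv1 hv2 using hch
  have hcard := Finset.card_le_card_of_injOn (fun g => pe n (v g))
    (fun g hg => ?_) (fun g hg g' hg' h => ?_)
    (s := Finset.range d) (t := (l.take i).toFinset)
  · rw [Finset.card_range] at hcard
    have h2 : (l.take i).toFinset.card ≤ (l.take i).length := List.toFinset_card_le _
    have h3 : (l.take i).length ≤ i := by simp [List.length_take]
    omega
  · rw [Finset.mem_coe, Finset.mem_range] at hg
    exact List.mem_toFinset.mpr (hv2 g hg)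
  · rw [Finset.mem_coe, Finset.mem_range] at hg
    rw [Finset.mem_coe, Finset.mem_range] at hg'
    have b1 := hv1 g hg
    have b2 := hv1 g' hg'
    have hvg : v g + 1 < n := by omega
    have hvg' : v g' + 1 < n := by omega
    have := pe_inj hvg hvg' h
    omega

end Edges

section Values

open SimpleGraph
open Fin.NatCast

variable {n : ℕ} [NeZero n]

lemma thue_lb3 {l : List (Sym2 (Fin n))} (hl : IsEdgeOrdering (pathGraph n) l)
    (hn : 4 ≤ n) {i : ℕ} (hi : i < (n + 2) / 3 - 1) :
    3 ≤ thueNumber ((pathGraph n).deleteEdges {e | e ∈ l.take i}) := by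
  obtain ⟨g, hg, hsur⟩ := exists_group hl hn hi
  set G := (pathGraph n).deleteEdges {e | e ∈ l.take i} with hG
  have hle : G ≤ pathGraph n := SimpleGraph.deleteEdges_le _
  refine le_thueNumber ⟨3, exists_thue_three hle⟩ (fun k φ hφ => ?_)
  have adj : ∀ v, 3 * g ≤ v → v + 1 ≤ 3 * g + 3 →
      G.Adj ((v : ℕ) : Fin n) ((v + 1 : ℕ) : Fin n) := by
    intro v h1 h2
    rw [hG, SimpleGraph.deleteEdges_adj]
    exact ⟨pe_adj (by omega), hsur v h1 (by omega)⟩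
  have hval : ∀ v : ℕ, v ≤ 3 * g + 3 → ((v : ℕ) : Fin n).val = v :=
    fun v hv => Fin.val_cast_of_lt (by omega)
  have hne : ∀ v w : ℕ, v ≤ 3 * g + 3 → w ≤ 3 * g + 3 → v ≠ w →
      ((v : ℕ) : Fin n) ≠ ((w : ℕ) : Fin n) := by
    intro v w h1 h2 h3 h
    rw [← hval v h1, ← hval w h2] at h3
    exact h3 (congrArg Fin.val h)
  refine three_le_thueNumber_aux
    (adj (3 * g) le_rfl (by omega))
    (adj (3 * g + 1) (by omega) (by omega))
    (adj (3 * g + 2) (by omega) (by omega))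
    (hne (3 * g) (3 * g + 2) (by omega) (by omega) (by omega))
    (hne (3 * g) (3 * g + 3) (by omega) (by omega) (by omega))
    (hne (3 * g + 1) (3 * g + 3) (by omega) (by omega) (by omega)) k φ hφ

lemma thue_lb2 {l : List (Sym2 (Fin n))} (hl : IsEdgeOrdering (pathGraph n) l)
    (hn : 4 ≤ n) {i : ℕ} (hi : i ≤ n - 2) :
    2 ≤ thueNumber ((pathGraph n).deleteEdges {e | e ∈ l.take i}) := by
  obtain ⟨v, hv, hsur⟩ := exists_surviving hl hi (by omega)
  set G := (pathGraph n).deleteEdges {e | e ∈ l.take i} with hG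
  have hle : G ≤ pathGraph n := SimpleGraph.deleteEdges_le _
  refine le_thueNumber ⟨3, exists_thue_three hle⟩ (fun k φ hφ => ?_)
  have adj : G.Adj ((v : ℕ) : Fin n) ((v + 1 : ℕ) : Fin n) := by
    rw [hG, SimpleGraph.deleteEdges_adj]
    exact ⟨pe_adj hv, hsur⟩
  exact two_le_thueNumber_aux adj k φ hφ

lemma thue_lb1 {G : SimpleGraph (Fin n)} (hle : G ≤ pathGraph n) (hn : 1 ≤ n) :
    1 ≤ thueNumber G :=
  le_thueNumber ⟨3, exists_thue_three hle⟩ (fun k φ _ => one_le_thueNumber_aux hn k φ)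

lemma thue_ub3 {G : SimpleGraph (Fin n)} (hle : G ≤ pathGraph n) : thueNumber G ≤ 3 :=
  thueNumber_le (exists_thue_three hle)

/-- The cut edges: every third edge of the path. -/
def cuts (n : ℕ) [NeZero n] : List (Sym2 (Fin n)) :=
  (List.range ((n + 2) / 3 - 1)).map (fun k => pe n (3 * k + 2))

/-- The optimal edge ordering: first the cut edges, then the rest. -/
noncomputable def lopt (n : ℕ) [NeZero n] : List (Sym2 (Fin n)) :=
  cuts n ++ (EF n \ (cuts n).toFinset).toList

lemma cuts_length : (cuts n).length = (n + 2) / 3 - 1 := by simp [cuts]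

lemma cuts_subset_EF (hn : 4 ≤ n) : ∀ e ∈ cuts n, e ∈ EF n := by
  intro e he
  obtain ⟨k, hk, rfl⟩ := List.mem_map.mp he
  rw [List.mem_range] at hk
  exact Finset.mem_image.mpr ⟨3 * k + 2, Finset.mem_range.mpr (by omega), rfl⟩

lemma cuts_nodup (hn : 4 ≤ n) : (cuts n).Nodup := by
  refine List.Nodup.map_on ?_ List.nodup_range
  intro k hk k' hk' h
  rw [List.mem_range] at hk hk'
  have := pe_inj (v := 3 * k + 2) (w := 3 * k' + 2) (by omega) (by omega) h
  omega

lemma lopt_ordering (hn : 4 ≤ n) : IsEdgeOrdering (pathGraph n) (lopt n) := by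
  constructor
  · refine List.Nodup.append (cuts_nodup hn) (Finset.nodup_toList _) ?_
    intro e he he'
    rw [Finset.mem_toList, Finset.mem_sdiff] at he'
    exact he'.2 (List.mem_toFinset.mpr he)
  · intro e
    rw [← mem_EF, lopt, List.mem_append, Finset.mem_toList, Finset.mem_sdiff]
    constructor
    · rintro (h | h)
      · exact cuts_subset_EF hn e h
      · exact h.1
    · intro h
      by_cases hc : e ∈ cuts n
      · exact Or.inl hc
      · exact Or.inr ⟨h, fun hc' => hc (List.mem_toFinset.mp hc')⟩

lemma lopt_length (hn : 4 ≤ n) : (lopt n).length = n - 1 :=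
  ordering_length (lopt_ordering hn)

lemma cuts_prefix_lopt (hn : 4 ≤ n) {i : ℕ} (hi : (n + 2) / 3 - 1 ≤ i) :
    ∀ e ∈ cuts n, e ∈ (lopt n).take i := by
  intro e he
  have h1 : (lopt n).take i = cuts n ++ ((EF n \ (cuts n).toFinset).toList.take
      (i - ((n + 2) / 3 - 1))) := by
    rw [lopt]
    nth_rewrite 1 [show i = (cuts n).length + (i - ((n + 2) / 3 - 1)) from by
      rw [cuts_length]; omega]
    rw [List.take_length_add_append]
  rw [h1]
  exact List.mem_append_left _ he

lemma thue_val2 (hn : 4 ≤ n) {i : ℕ} (hi1 : (n + 2) / 3 - 1 ≤ i) (hi2 : i ≤ n - 2) :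
    thueNumber ((pathGraph n).deleteEdges {e | e ∈ (lopt n).take i}) = 2 := by
  refine le_antisymm ?_ (thue_lb2 (lopt_ordering hn) hn hi2)
  refine thueNumber_le (blockgraph_thue2 ?_)
  intro a b hab
  rw [SimpleGraph.deleteEdges_adj] at hab
  obtain ⟨hadj, hmem⟩ := hab
  rw [pathGraph_adj] at hadj
  have key : ∀ u v : Fin n, u.val + 1 = v.val → s(u, v) ∉ {e : Sym2 (Fin n) | e ∈ (lopt n).take i}
      → u.val / 3 = v.val / 3 := by
    intro u v huv hnm
    by_contra hdiv
    have hu3 : u.val % 3 = 2 := by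
      have := u.isLt
      have := v.isLt
      omega
    set k := u.val / 3 with hk
    have hueq : u.val = 3 * k + 2 := by omega
    have hkd : k < (n + 2) / 3 - 1 := by
      have := v.isLt
      omega
    have hcut : pe n u.val ∈ cuts n := by
      rw [cuts, List.mem_map]
      exact ⟨k, List.mem_range.mpr hkd, by rw [← hueq]⟩
    have hmem' : pe n u.val ∈ (lopt n).take i := cuts_prefix_lopt hn hi1 _ hcut
    have hpe : pe n u.val = s(u, v) := by
      rw [pe]
      have h1 : ((u.val : ℕ) : Fin n) = u := Fin.cast_val_eq_self u
      have h2 : ((u.val + 1 : ℕ) : Fin n) = v := by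
        refine Fin.ext ?_
        rw [Fin.val_cast_of_lt (by have := v.isLt; omega)]
        omega
      rw [h1, h2]
    rw [hpe] at hmem'
    exact hnm hmem'
  rcases hadj with h | h
  · exact ⟨Or.inl h, key a b h hmem⟩
  · refine ⟨Or.inr h, (key b a h ?_).symm⟩
    rwa [Sym2.eq_swap]

lemma thue_val1 (hn : 4 ≤ n) :
    thueNumber ((pathGraph n).deleteEdges {e | e ∈ (lopt n).take (n - 1)}) = 1 := by
  refine thueNumber_edgeless (by omega) ?_
  intro a b hab
  rw [SimpleGraph.deleteEdges_adj] at hab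
  obtain ⟨hadj, hmem⟩ := hab
  refine hmem ?_
  have : (lopt n).take (n - 1) = lopt n := by
    rw [List.take_of_length_le (by rw [lopt_length hn])]
  rw [this]
  exact ((lopt_ordering hn).2 _).mpr ((SimpleGraph.mem_edgeSet _).mpr hadj)

end Values

lemma sum_if_aux (m d : ℕ) (hd : d ≤ m) :
    (∑ i ∈ Finset.range m, if i < d then (3 : ℕ) else 2) = 3 * d + 2 * (m - d) := by
  rw [← Finset.sum_filter_add_sum_filter_not (Finset.range m) (fun i => i < d)]
  have h1 : (Finset.range m).filter (fun i => i < d) = Finset.range d := by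
    ext i; simp only [Finset.mem_filter, Finset.mem_range]; omega
  have h2 : (Finset.range m).filter (fun i => ¬ i < d) = Finset.Ico d m := by
    ext i; simp only [Finset.mem_filter, Finset.mem_range, Finset.mem_Ico]; omega
  rw [h1, h2]
  have e1 : (∑ i ∈ Finset.range d, if i < d then (3 : ℕ) else 2) = 3 * d := by
    rw [Finset.sum_congr rfl (fun i hi => if_pos (Finset.mem_range.mp hi)),
      Finset.sum_const, Finset.card_range, smul_eq_mul, Nat.mul_comm]
  have e2 : (∑ i ∈ Finset.Ico d m, if i < d then (3 : ℕ) else 2) = 2 * (m - d) := by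
    rw [Finset.sum_congr rfl (fun i hi => if_neg (by
      have := Finset.mem_Ico.mp hi; omega)), Finset.sum_const, Nat.card_Ico,
      smul_eq_mul, Nat.mul_comm]
  omega

section Final

open SimpleGraph

lemma tauValue_eq {n : ℕ} [NeZero n] (hn : 4 ≤ n) {l : List (Sym2 (Fin n))}
    (hl : IsEdgeOrdering (pathGraph n) l) :
    tauValue (pathGraph n) l =
      (∑ i ∈ Finset.range n,
        (thueNumber ((pathGraph n).deleteEdges {e | e ∈ l.take i}) : ℝ)) / n := by
  rw [tauValue, ordering_length hl]
  have h1 : (n - 1) + 1 = n := by omega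
  rw [h1]
  congr 1
  rw [Nat.cast_sub (by omega : 1 ≤ n)]
  push_cast
  ring

lemma tauValue_lopt {n : ℕ} [NeZero n] (hn : 4 ≤ n) :
    tauValue (pathGraph n) (lopt n) = ((2 * n - 1 + ((n + 2) / 3 - 1) : ℕ) : ℝ) / n := by
  set d := (n + 2) / 3 - 1 with hd
  rw [tauValue_eq hn (lopt_ordering hn)]
  congr 1
  have hvals : ∀ i ∈ Finset.range n,
      (thueNumber ((pathGraph n).deleteEdges {e | e ∈ (lopt n).take i}) : ℝ) =
        ((if i < d then 3 else if i < n - 1 then 2 else 1 : ℕ) : ℝ) := by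
    intro i hi
    rw [Finset.mem_range] at hi
    congr 1
    by_cases h1 : i < d
    · rw [if_pos h1]
      exact le_antisymm (thue_ub3 (SimpleGraph.deleteEdges_le _))
        (thue_lb3 (lopt_ordering hn) hn h1)
    · rw [if_neg h1]
      by_cases h2 : i < n - 1
      · rw [if_pos h2]
        exact thue_val2 hn (by omega) (by omega)
      · rw [if_neg h2]
        have h3 : i = n - 1 := by omega
        rw [h3]
        exact thue_val1 hn
  rw [Finset.sum_congr rfl hvals, ← Nat.cast_sum]
  congr 1
  obtain ⟨m, rfl⟩ : ∃ m, n = m + 1 := ⟨n - 1, by omega⟩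
  simp only [Nat.add_sub_cancel] at *
  rw [Finset.sum_range_succ, if_neg (by omega), if_neg (by omega)]
  have hmain : (∑ i ∈ Finset.range m,
      if i < d then (3:ℕ) else if i < m then 2 else 1) =
      (∑ i ∈ Finset.range m, if i < d then (3:ℕ) else 2) := by
    refine Finset.sum_congr rfl (fun i hi => ?_)
    rw [Finset.mem_range] at hi
    by_cases h1 : i < d
    · rw [if_pos h1, if_pos h1]
    · rw [if_neg h1, if_neg h1, if_pos hi]
  rw [hmain, sum_if_aux _ _ (by omega)]
  omega

lemma tauValue_lb {n : ℕ} [NeZero n] (hn : 4 ≤ n) {l : List (Sym2 (Fin n))}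
    (hl : IsEdgeOrdering (pathGraph n) l) :
    ((2 * n - 1 + ((n + 2) / 3 - 1) : ℕ) : ℝ) / n ≤ tauValue (pathGraph n) l := by
  set d := (n + 2) / 3 - 1 with hd
  rw [tauValue_eq hn hl]
  have hn0 : (0:ℝ) < n := by positivity
  gcongr
  calc ((2 * n - 1 + d : ℕ) : ℝ)
      = ((∑ i ∈ Finset.range n, if i < d then (3:ℕ) else if i < n - 1 then 2 else 1 : ℕ) : ℝ) := by
        congr 1
        obtain ⟨m, rfl⟩ : ∃ m, n = m + 1 := ⟨n - 1, by omega⟩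
        simp only [Nat.add_sub_cancel] at *
        rw [Finset.sum_range_succ, if_neg (by omega), if_neg (by omega)]
        have hmain : (∑ i ∈ Finset.range m,
            if i < d then (3:ℕ) else if i < m then 2 else 1) =
            (∑ i ∈ Finset.range m, if i < d then (3:ℕ) else 2) := by
          refine Finset.sum_congr rfl (fun i hi => ?_)
          rw [Finset.mem_range] at hi
          by_cases h1 : i < d
          · rw [if_pos h1, if_pos h1]
          · rw [if_neg h1, if_neg h1, if_pos hi]
        rw [hmain, sum_if_aux _ _ (by omega)]
        omega
    _ ≤ ∑ i ∈ Finset.range n,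
        (thueNumber ((pathGraph n).deleteEdges {e | e ∈ l.take i}) : ℝ) := by
        rw [Nat.cast_sum]
        refine Finset.sum_le_sum (fun i hi => ?_)
        rw [Finset.mem_range] at hi
        rw [Nat.cast_le]
        by_cases h1 : i < d
        · rw [if_pos h1]
          exact thue_lb3 hl hn h1
        · rw [if_neg h1]
          by_cases h2 : i < n - 1
          · rw [if_pos h2]
            exact thue_lb2 hl hn (by omega)
          · rw [if_neg h2]
            exact thue_lb1 (SimpleGraph.deleteEdges_le _) (by omega)

lemma tauIndex_pathGraph_aux (n : ℕ) (hn : 4 ≤ n) :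
    tauIndex (pathGraph n) = ((2 * n - 1 + ((n + 2) / 3 - 1) : ℕ) : ℝ) / n := by
  haveI : NeZero n := ⟨by omega⟩
  set T : ℝ := ((2 * n - 1 + ((n + 2) / 3 - 1) : ℕ) : ℝ) / n with hT
  have hmem : T ∈ {x | ∃ l, IsEdgeOrdering (pathGraph n) l ∧ tauValue (pathGraph n) l = x} :=
    ⟨lopt n, lopt_ordering hn, tauValue_lopt hn⟩
  refine le_antisymm (csInf_le ⟨T, ?_⟩ hmem) (le_csInf ⟨T, hmem⟩ ?_)
  · rintro x ⟨l, hl, rfl⟩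
    exact tauValue_lb hn hl
  · rintro x ⟨l, hl, rfl⟩
    exact tauValue_lb hn hl

end Final
/-- the τ-index of the path `P_n`, `n ≥ 4`, according to the residue of
`n` modulo `3`. -/
theorem tauIndex_pathGraph (n : ℕ) (hn : 4 ≤ n) :
    (n % 3 = 0 → tauIndex (pathGraph n) = (7 * n - 6) / (3 * n)) ∧
    (n % 3 = 2 → tauIndex (pathGraph n) = (7 * n - 5) / (3 * n)) ∧
    (n % 3 = 1 → tauIndex (pathGraph n) = (7 * n - 4) / (3 * n)) := by
  have hkey : ∀ c : ℕ, 3 * (2 * n - 1 + ((n + 2) / 3 - 1)) = 7 * n - c → c ≤ 7 * n →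
      tauIndex (pathGraph n) = (7 * n - c) / (3 * n) := by
    intro c h3 hc
    rw [tauIndex_pathGraph_aux n hn]
    set X : ℕ := 2 * n - 1 + ((n + 2) / 3 - 1) with hX
    have hr : (3:ℝ) * X = 7 * n - c := by
      calc (3:ℝ) * X = ((3 * X : ℕ) : ℝ) := by push_cast; ring
        _ = ((7 * n - c : ℕ) : ℝ) := by rw [h3]
        _ = 7 * (n:ℝ) - c := by rw [Nat.cast_sub hc]; push_cast; ring
    have hn0 : (n:ℝ) ≠ 0 := by positivity
    field_simp
    linear_combination hr
  refine ⟨fun h0 => hkey 6 (by omega) (by omega), fun h0 => hkey 5 (by omega) (by omega),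
    fun h0 => hkey 4 (by omega) (by omega)⟩
end
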